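/- Let X be a complex Banach space and T a bounded operator on X. If for every complex scalar λ ≠ 0 the operator T − λI is Fredholm, then for every complex scalar λ ≠ 0 the operator T − λI is Fredholm of index 0. -/

import Mathlib

open ContinuousLinearMap

/-- A bounded operator is Fredholm if its kernel is finite dimensional and its range
is closed of finite codimension. -/
def IsFredholm {E : Type*} [NormedAddCommGroup E] [NormedSpace ℂ E] (T : E →L[ℂ] E) : Prop :=
  FiniteDimensional ℂ (LinearMap.ker (T : E →ₗ[ℂ] E)) ∧ IsClosed (LinearMap.range (T : E →ₗ[ℂ] E) : Set E) ∧
    FiniteDimensional ℂ (E ⧸ LinearMap.range (T : E →ₗ[ℂ] E))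

/-- The Fredholm index `dim N(T) - codim R(T)`. -/
noncomputable def fredInd {E : Type*} [NormedAddCommGroup E] [NormedSpace ℂ E]
    (T : E →L[ℂ] E) : ℤ :=
  (Module.finrank ℂ (LinearMap.ker (T : E →ₗ[ℂ] E)) : ℤ) - (Module.finrank ℂ (E ⧸ LinearMap.range (T : E →ₗ[ℂ] E)) : ℤ)

/-- A Riesz operator: `T - λ•I` is Fredholm for every nonzero scalar `λ`. -/
def IsRiesz {E : Type*} [NormedAddCommGroup E] [NormedSpace ℂ E] (T : E →L[ℂ] E) : Prop :=
  ∀ c : ℂ, c ≠ 0 → _root_.IsFredholm (T - c • (1 : E →L[ℂ] E))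

section Aux

open Module

variable {E : Type*} [NormedAddCommGroup E] [NormedSpace ℂ E] [CompleteSpace E]

/-- The map `(m, n) ↦ S m + n`. -/
noncomputable def hatMap (M N : Submodule ℂ E) (S : E →L[ℂ] E) : (M × N) →L[ℂ] E :=
  S.comp (M.subtypeL.comp (ContinuousLinearMap.fst ℂ M N)) +
    N.subtypeL.comp (ContinuousLinearMap.snd ℂ M N)

lemma hatMap_apply (M N : Submodule ℂ E) (S : E →L[ℂ] E) (z : M × N) :
    hatMap M N S z = S z.1 + z.2 := rfl

lemma map_clm_coe {E : Type*} [NormedAddCommGroup E] [NormedSpace ℂ E]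
    (f : E →L[ℂ] E) (q : Submodule ℂ E) :
    Submodule.map (f : E →ₗ[ℂ] E) q = Submodule.map (f : E →ₗ[ℂ] E) q := by
  ext x; simp [Submodule.mem_map]

lemma findim_map {E : Type*} [NormedAddCommGroup E] [NormedSpace ℂ E]
    (f : E →L[ℂ] E) (q : Submodule ℂ E) [FiniteDimensional ℂ q] :
    FiniteDimensional ℂ (Submodule.map (f : E →ₗ[ℂ] E) q) := by
  rw [← map_clm_coe]
  infer_instance

lemma key (K M N : Submodule ℂ E) [FiniteDimensional ℂ K] [FiniteDimensional ℂ N]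
    (hKM : IsCompl K M) (hMc : IsClosed (M : Set E)) (S : E →L[ℂ] E)
    (hbij : Function.Bijective (hatMap M N S)) :
    _root_.IsFredholm S ∧ fredInd S = (Module.finrank ℂ K : ℤ) - (Module.finrank ℂ N : ℤ) := by
  haveI : CompleteSpace M := hMc.completeSpace_coe
  set SM : Submodule ℂ E := Submodule.map (S : E →ₗ[ℂ] E) M with hSMdef
  -- `IsCompl SM N`
  have hSMN : IsCompl SM N := by
    constructor
    · rw [Submodule.disjoint_def]
      rintro x hx hxN
      obtain ⟨m, hm, rfl⟩ := hx
      have h0 : hatMap M N S (⟨m, hm⟩, -⟨S m, hxN⟩) = hatMap M N S 0 := by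
        simp [hatMap_apply]
      have h1 := hbij.1 h0
      have hm0 : m = 0 := congrArg (fun p => ((Prod.fst p : M) : E)) h1
      simp [hm0]
    · rw [codisjoint_iff, eq_top_iff]
      intro x _
      obtain ⟨z, hz⟩ := hbij.2 x
      rw [hatMap_apply] at hz
      exact hz ▸ Submodule.add_mem_sup (Submodule.mem_map_of_mem z.1.2) z.2.2
  have hker0 : LinearMap.ker (hatMap M N S : (M × N) →ₗ[ℂ] E) = ⊥ := LinearMap.ker_eq_bot (f := (hatMap M N S : (M × N) →ₗ[ℂ] E)) |>.mpr hbij.1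
  have hrng0 : LinearMap.range (hatMap M N S : (M × N) →ₗ[ℂ] E) = ⊤ := LinearMap.range_eq_top (f := (hatMap M N S : (M × N) →ₗ[ℂ] E)) |>.mpr hbij.2
  let e := ContinuousLinearEquiv.ofBijective (hatMap M N S) hker0 hrng0
  have he : ∀ z, e z = hatMap M N S z := fun z => rfl
  -- `SM` is closed
  have hSMc : IsClosed (SM : Set E) := by
    have hset : (SM : Set E) = e '' (Set.univ ×ˢ ({0} : Set N)) := by
      ext x
      constructor
      · rintro ⟨m, hm, rfl⟩
        exact ⟨(⟨m, hm⟩, 0), by simp, by simp [he, hatMap_apply]⟩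
      · rintro ⟨⟨m, n⟩, ⟨-, hn⟩, rfl⟩
        have hn0 : n = 0 := hn
        have : e (m, n) = S m := by simp [he, hatMap_apply, hn0]
        rw [this]
        exact Submodule.mem_map_of_mem m.2
    rw [hset]
    exact e.toHomeomorph.isClosedMap _ (isClosed_univ.prod isClosed_singleton)
  -- the quotient by `SM` is finite dimensional
  let eQN := Submodule.quotientEquivOfIsCompl SM N hSMN
  haveI : FiniteDimensional ℂ (E ⧸ SM) := eQN.symm.finiteDimensional
  have hQN : finrank ℂ (E ⧸ SM) = finrank ℂ N := eQN.finrank_eq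
  -- the finite-dimensional reduction `A`
  let A : K →ₗ[ℂ] (E ⧸ SM) := (SM.mkQ ∘ₗ (S : E →ₗ[ℂ] E)) ∘ₗ K.subtype
  have hA : ∀ k : K, A k = SM.mkQ (S k) := fun k => rfl
  let p := K.linearProjOfIsCompl M hKM
  have hsub : ∀ x : E, x - (p x : E) ∈ M := by
    intro x
    have h := Submodule.projection_add_projection_eq_self hKM x
    have h2 : ((M.linearProjOfIsCompl K hKM.symm) x : E) = x - ((K.linearProjOfIsCompl M hKM) x : E) :=
      eq_sub_iff_add_eq.mpr (by rw [add_comm]; exact h)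
    rw [show p = K.linearProjOfIsCompl M hKM from rfl, ← h2]
    exact Submodule.coe_mem _
  have hSp : ∀ x : E, S x - S (p x) ∈ SM := by
    intro x
    have := Submodule.mem_map_of_mem (f := (S : E →ₗ[ℂ] E)) (hsub x)
    rw [map_sub] at this; exact this
  -- kernel comparison
  have hmemker : ∀ x : LinearMap.ker (S : E →ₗ[ℂ] E), p (x : E) ∈ LinearMap.ker A := by
    intro x
    rw [LinearMap.mem_ker, hA]
    have h2 := hSp (x : E)
    rw [show S (x : E) = 0 from LinearMap.mem_ker.mp x.2, zero_sub] at h2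
    have h3 : S ((p (x : E) : E)) ∈ SM := by simpa using SM.neg_mem h2
    rw [Submodule.mkQ_apply]
    exact (Submodule.Quotient.mk_eq_zero SM).mpr h3
  let φ : LinearMap.ker (S : E →ₗ[ℂ] E) →ₗ[ℂ] LinearMap.ker A :=
    LinearMap.codRestrict (LinearMap.ker A) (p ∘ₗ (LinearMap.ker (S : E →ₗ[ℂ] E)).subtype) hmemker
  have hφ : ∀ x : LinearMap.ker (S : E →ₗ[ℂ] E), (φ x : K) = p (x : E) := fun x => rfl
  have hφbij : Function.Bijective φ := by
    constructor
    · intro x y hxy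
      have hpxy : p (x : E) = p (y : E) := by
        have := congrArg (Subtype.val) hxy
        rwa [hφ, hφ] at this
      have hxyM : (x : E) - (y : E) ∈ M := by
        have h1 : p ((x : E) - (y : E)) = 0 := by rw [map_sub, hpxy, sub_self]
        exact (Submodule.linearProjOfIsCompl_apply_eq_zero_iff hKM).mp h1
      have h0 : hatMap M N S (⟨(x : E) - (y : E), hxyM⟩, 0) = hatMap M N S 0 := by
        simp [hatMap_apply, map_sub, LinearMap.mem_ker.mp x.2, LinearMap.mem_ker.mp y.2]
      have h1 := hbij.1 h0
      have : (x : E) - (y : E) = 0 := congrArg (fun q => ((Prod.fst q : M) : E)) h1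
      exact Subtype.ext (sub_eq_zero.mp this)
    · rintro ⟨k, hk⟩
      have h1 : S (k : E) ∈ SM := by
        have h2 := LinearMap.mem_ker.mp hk
        rw [hA, Submodule.mkQ_apply] at h2
        exact (Submodule.Quotient.mk_eq_zero SM).mp h2
      obtain ⟨m, hm, hmS⟩ := h1
      have hx : (k : E) - m ∈ LinearMap.ker (S : E →ₗ[ℂ] E) := by
        rw [LinearMap.mem_ker, map_sub, hmS]; exact sub_self _
      refine ⟨⟨(k : E) - m, hx⟩, ?_⟩
      apply Subtype.ext
      rw [hφ]
      show p ((k : E) - m) = k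
      rw [show p = K.projectionOnto M hKM from rfl, map_sub, Submodule.linearProjOfIsCompl_apply_left hKM k,
        (Submodule.linearProjOfIsCompl_apply_eq_zero_iff hKM).mpr hm, sub_zero]
  let eker := LinearEquiv.ofBijective φ hφbij
  haveI hfinker : FiniteDimensional ℂ (LinearMap.ker (S : E →ₗ[ℂ] E)) := eker.symm.finiteDimensional
  have hkerrank : finrank ℂ (LinearMap.ker (S : E →ₗ[ℂ] E)) = finrank ℂ (LinearMap.ker A) := eker.finrank_eq
  -- range decomposition
  have hrangeS : LinearMap.range (S : E →ₗ[ℂ] E) = Submodule.map (S : E →ₗ[ℂ] E) K ⊔ SM := by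
    rw [LinearMap.range_eq_map, ← codisjoint_iff.mp hKM.codisjoint, Submodule.map_sup]
  -- range is closed
  have hcc : SM.ClosedComplemented :=
    Submodule.ClosedComplemented.of_isCompl_isClosed hSMN hSMc
      (Submodule.closed_of_finiteDimensional N)
  obtain ⟨π, hπ⟩ := hcc
  let r : E →L[ℂ] E := ContinuousLinearMap.id ℂ E - SM.subtypeL.comp π
  have hrapp : ∀ x : E, r x = x - π x := fun x => rfl
  have hkerr : LinearMap.ker (r : E →ₗ[ℂ] E) = SM := by
    ext x
    rw [LinearMap.mem_ker, ContinuousLinearMap.coe_coe, hrapp, sub_eq_zero]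
    constructor
    · intro hx
      rw [hx]
      exact Submodule.coe_mem _
    · intro hx
      rw [hπ ⟨x, hx⟩]
  have hclosed_range : IsClosed (LinearMap.range (S : E →ₗ[ℂ] E) : Set E) := by
    haveI hWfd : FiniteDimensional ℂ (Submodule.map (r : E →ₗ[ℂ] E) (LinearMap.range (S : E →ₗ[ℂ] E))) := by
      rw [hrangeS, Submodule.map_sup]
      have h0 : Submodule.map (r : E →ₗ[ℂ] E) SM = ⊥ := by
        rw [eq_bot_iff]
        rintro x ⟨s, hs, rfl⟩
        rw [← hkerr] at hs
        exact LinearMap.mem_ker.mp hs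
      rw [h0, sup_bot_eq]
      haveI : FiniteDimensional ℂ (Submodule.map (S : E →ₗ[ℂ] E) K) := findim_map S K
      exact findim_map r _
    have heq : LinearMap.range (S : E →ₗ[ℂ] E) = Submodule.comap (r : E →ₗ[ℂ] E) (Submodule.map (r : E →ₗ[ℂ] E) (LinearMap.range (S : E →ₗ[ℂ] E))) := by
      rw [Submodule.comap_map_eq, hkerr, hrangeS, sup_assoc, sup_idem]
    rw [heq]
    exact IsClosed.preimage r.continuous
      (Submodule.closed_of_finiteDimensional (Submodule.map (r : E →ₗ[ℂ] E) (LinearMap.range (S : E →ₗ[ℂ] E))))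
  -- cokernel comparison
  have hle : SM ≤ LinearMap.range (S : E →ₗ[ℂ] E) := by rw [hrangeS]; exact le_sup_right
  let ecoker := Submodule.quotientQuotientEquivQuotient SM (LinearMap.range (S : E →ₗ[ℂ] E)) hle
  have hWA : Submodule.map SM.mkQ (LinearMap.range (S : E →ₗ[ℂ] E)) = LinearMap.range A := by
    rw [hrangeS, Submodule.map_sup]
    have h1 : Submodule.map SM.mkQ SM = ⊥ := by
      rw [eq_bot_iff]
      rintro x ⟨s, hs, rfl⟩
      rw [Submodule.mem_bot, Submodule.mkQ_apply]
      exact (Submodule.Quotient.mk_eq_zero SM).mpr hs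
    have h2 : LinearMap.range A = Submodule.map SM.mkQ (Submodule.map (S : E →ₗ[ℂ] E) K) := by
      show LinearMap.range ((SM.mkQ ∘ₗ (S : E →ₗ[ℂ] E)) ∘ₗ K.subtype) = _
      rw [LinearMap.range_comp, Submodule.range_subtype, Submodule.map_comp, map_clm_coe]
    rw [h1, sup_bot_eq, h2]
  haveI : FiniteDimensional ℂ ((E ⧸ SM) ⧸ Submodule.map SM.mkQ (LinearMap.range (S : E →ₗ[ℂ] E))) :=
    inferInstance
  haveI hfincoker : FiniteDimensional ℂ (E ⧸ LinearMap.range (S : E →ₗ[ℂ] E)) := ecoker.finiteDimensional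
  have hcokerrank : finrank ℂ (E ⧸ LinearMap.range (S : E →ₗ[ℂ] E))
      = finrank ℂ ((E ⧸ SM) ⧸ LinearMap.range A) := by
    rw [← ecoker.finrank_eq, hWA]
  -- index arithmetic
  have e1 : finrank ℂ (LinearMap.range A) + finrank ℂ (LinearMap.ker A) = finrank ℂ K :=
    LinearMap.finrank_range_add_finrank_ker A
  have e2 : finrank ℂ ((E ⧸ SM) ⧸ LinearMap.range A) + finrank ℂ (LinearMap.range A)
      = finrank ℂ (E ⧸ SM) :=
    Submodule.finrank_quotient_add_finrank (LinearMap.range A)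
  refine ⟨⟨hfinker, hclosed_range, hfincoker⟩, ?_⟩
  rw [fredInd, hkerrank, hcokerrank]
  rw [hQN] at e2
  omega

set_option maxHeartbeats 2000000 in
lemma locally_const (T : E →L[ℂ] E) (hT : _root_.IsFredholm T) :
    ∃ ε > 0, ∀ S : E →L[ℂ] E, ‖S - T‖ < ε → _root_.IsFredholm S ∧ fredInd S = fredInd T := by
  obtain ⟨h1, h2, h3⟩ := hT
  haveI := h1
  haveI := h3
  -- a closed complement `M` of the kernel
  obtain ⟨f, hf⟩ := Submodule.ClosedComplemented.of_finiteDimensional (LinearMap.ker (T : E →ₗ[ℂ] E))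
  set M : Submodule ℂ E := LinearMap.ker (f : E →ₗ[ℂ] LinearMap.ker (T : E →ₗ[ℂ] E)) with hMdef
  have hKM : IsCompl (LinearMap.ker (T : E →ₗ[ℂ] E)) M := LinearMap.isCompl_of_proj hf
  have hMc : IsClosed (M : Set E) := isClosed_ker f
  clear_value M
  haveI : CompleteSpace M := hMc.completeSpace_coe
  -- a complement `N` of the range
  obtain ⟨N, hN⟩ := Submodule.exists_isCompl (LinearMap.range (T : E →ₗ[ℂ] E))
  haveI : FiniteDimensional ℂ N :=
    (Submodule.quotientEquivOfIsCompl _ _ hN).finiteDimensional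
  -- `hatMap M N T` is bijective
  have hTbij : Function.Bijective (hatMap M N T) := by
    constructor
    · intro z w hzw
      have h0 : T (z.1 : E) - T (w.1 : E) = -((z.2 : E) - (w.2 : E)) := by
        have h := hzw
        rw [hatMap_apply, hatMap_apply, ← sub_eq_zero] at h
        rw [← sub_eq_zero]
        calc T (z.1 : E) - T (w.1 : E) - -((z.2 : E) - (w.2 : E))
            = T (z.1 : E) + (z.2 : E) - (T (w.1 : E) + (w.2 : E)) := by abel
          _ = 0 := h
      have hmem : T ((z.1 : E) - (w.1 : E)) ∈ LinearMap.range (T : E →ₗ[ℂ] E) ⊓ N := by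
        constructor
        · exact LinearMap.mem_range_self (T : E →ₗ[ℂ] E) _
        · rw [map_sub, h0]
          exact N.neg_mem (N.sub_mem z.2.2 w.2.2)
      rw [disjoint_iff.mp hN.disjoint, Submodule.mem_bot] at hmem
      have hmemk : (z.1 : E) - (w.1 : E) ∈ LinearMap.ker (T : E →ₗ[ℂ] E) ⊓ M := by
        exact ⟨LinearMap.mem_ker.mpr hmem, M.sub_mem z.1.2 w.1.2⟩
      rw [disjoint_iff.mp hKM.disjoint, Submodule.mem_bot] at hmemk
      have h1' : (z.1 : E) = (w.1 : E) := sub_eq_zero.mp hmemk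
      have h2' : (z.2 : E) = (w.2 : E) := by
        have := h0
        rw [show T (z.1 : E) = T (w.1 : E) from congrArg T h1', sub_self] at this
        have := neg_eq_zero.mp this.symm
        exact sub_eq_zero.mp this
      exact Prod.ext (Subtype.ext h1') (Subtype.ext h2')
    · intro x
      have hx : x ∈ LinearMap.range (T : E →ₗ[ℂ] E) ⊔ N := by
        rw [codisjoint_iff.mp hN.codisjoint]; trivial
      obtain ⟨y, hy, n, hn, rfl⟩ := Submodule.mem_sup.mp hx
      obtain ⟨w, rfl⟩ := hy
      -- decompose w along ker T ⊕ M
      have hw : w - ((LinearMap.ker (T : E →ₗ[ℂ] E)).linearProjOfIsCompl M hKM w : E) ∈ M := by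
        have h := Submodule.projection_add_projection_eq_self hKM w
        have h2' : ((M.linearProjOfIsCompl _ hKM.symm) w : E)
            = w - (((LinearMap.ker (T : E →ₗ[ℂ] E)).linearProjOfIsCompl M hKM) w : E) :=
          eq_sub_iff_add_eq.mpr (by rw [add_comm]; exact h)
        rw [← h2']
        exact Submodule.coe_mem _
      refine ⟨(⟨_, hw⟩, ⟨n, hn⟩), ?_⟩
      rw [hatMap_apply]
      simp only [map_sub]
      have : T (((LinearMap.ker (T : E →ₗ[ℂ] E)).linearProjOfIsCompl M hKM w : E)) = 0 :=
        LinearMap.mem_ker.mp (Submodule.coe_mem _)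
      rw [this, sub_zero]; rfl
  -- the inverse and the bound
  have hker0 : LinearMap.ker (hatMap M N T : (M × N) →ₗ[ℂ] E) = ⊥ := LinearMap.ker_eq_bot (f := (hatMap M N T : (M × N) →ₗ[ℂ] E)) |>.mpr hTbij.1
  have hrng0 : LinearMap.range (hatMap M N T : (M × N) →ₗ[ℂ] E) = ⊤ := LinearMap.range_eq_top (f := (hatMap M N T : (M × N) →ₗ[ℂ] E)) |>.mpr hTbij.2
  let e := ContinuousLinearEquiv.ofBijective (hatMap M N T) hker0 hrng0
  set C : ℝ := ‖(e.symm : E →L[ℂ] (M × N))‖ with hC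
  have hC0 : 0 ≤ C := norm_nonneg _
  refine ⟨(C + 1)⁻¹, by positivity, ?_⟩
  intro S hS
  -- `hatMap M N S` is bijective
  have hd : ∀ z : M × N, ‖hatMap M N S z - hatMap M N T z‖ ≤ ‖S - T‖ * ‖z‖ := by
    intro z
    rw [hatMap_apply, hatMap_apply]
    have : S (z.1 : E) + (z.2 : E) - (T (z.1 : E) + (z.2 : E)) = (S - T) (z.1 : E) := by
      rw [ContinuousLinearMap.sub_apply]
      abel
    rw [this]
    calc ‖(S - T) (z.1 : E)‖ ≤ ‖S - T‖ * ‖(z.1 : E)‖ := (S - T).le_opNorm _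
      _ ≤ ‖S - T‖ * ‖z‖ := by
          apply mul_le_mul_of_nonneg_left _ (norm_nonneg _)
          exact norm_fst_le z
  set u : (M × N) →L[ℂ] (M × N) := (e.symm : E →L[ℂ] (M × N)).comp (hatMap M N S) with hu
  have hb : ∀ z : M × N, ‖(u - 1) z‖ ≤ (C * ‖S - T‖) * ‖z‖ := by
    intro z
    have heT : ∀ y : M × N, (e : (M × N) →L[ℂ] E) y = hatMap M N T y := fun y => rfl
    have h1' : (u - 1) z = e.symm (hatMap M N S z - hatMap M N T z) := by
      rw [ContinuousLinearMap.sub_apply, ContinuousLinearMap.one_apply, map_sub]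
      congr 1
      exact (e.symm_apply_apply z).symm
    rw [h1']
    calc ‖(e.symm : E →L[ℂ] (M × N)) (hatMap M N S z - hatMap M N T z)‖
        ≤ C * ‖hatMap M N S z - hatMap M N T z‖ :=
          (e.symm : E →L[ℂ] (M × N)).le_opNorm _
      _ ≤ C * (‖S - T‖ * ‖z‖) := mul_le_mul_of_nonneg_left (hd z) hC0
      _ = (C * ‖S - T‖) * ‖z‖ := by ring
  have huunit : IsUnit u := by
    have h01 : ‖(1 : (M × N) →L[ℂ] (M × N)) - u‖ < 1 := by
      have hb' : ∀ z : M × N, ‖((1 : (M × N) →L[ℂ] (M × N)) - u) z‖ ≤ (C * ‖S - T‖) * ‖z‖ := by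
        intro z
        have h2' : ((1 : (M × N) →L[ℂ] (M × N)) - u) z = -((u - 1) z) := by
          show z - u z = -(u z - z)
          rw [neg_sub]
        rw [h2', norm_neg]
        exact hb z
      have hop : ‖(1 : (M × N) →L[ℂ] (M × N)) - u‖ ≤ C * ‖S - T‖ :=
        ContinuousLinearMap.opNorm_le_bound _ (by positivity) hb'
      calc ‖(1 : (M × N) →L[ℂ] (M × N)) - u‖ ≤ C * ‖S - T‖ := hop
        _ ≤ C * (C + 1)⁻¹ := mul_le_mul_of_nonneg_left (le_of_lt hS) hC0
        _ < 1 := by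
            rw [mul_inv_lt_iff₀ (by positivity), one_mul]
            linarith
    refine ⟨Units.oneSub ((1 : (M × N) →L[ℂ] (M × N)) - u) h01, ?_⟩
    show 1 - (1 - u) = u
    rw [sub_sub_cancel]
  have hubij : Function.Bijective u := isUnit_iff_bijective.mp huunit
  have hSbij : Function.Bijective (hatMap M N S) := by
    have hcomp : ∀ z, hatMap M N S z = e (u z) := by
      intro z
      show hatMap M N S z = e (e.symm (hatMap M N S z))
      rw [e.apply_symm_apply]
    have : ⇑(hatMap M N S) = ⇑e ∘ ⇑u := funext hcomp
    rw [this]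
    exact e.bijective.comp hubij
  obtain ⟨hSF, hSi⟩ := key (LinearMap.ker (T : E →ₗ[ℂ] E)) M N hKM hMc S hSbij
  obtain ⟨-, hTi⟩ := key (LinearMap.ker (T : E →ₗ[ℂ] E)) M N hKM hMc T hTbij
  exact ⟨hSF, hSi.trans hTi.symm⟩

lemma fredholm_of_bijective (S : E →L[ℂ] E) (h : Function.Bijective S) :
    _root_.IsFredholm S ∧ fredInd S = 0 := by
  have hker : LinearMap.ker (S : E →ₗ[ℂ] E) = ⊥ := LinearMap.ker_eq_bot (f := (S : E →ₗ[ℂ] E)) |>.mpr h.1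
  have hrng : LinearMap.range (S : E →ₗ[ℂ] E) = ⊤ := LinearMap.range_eq_top (f := (S : E →ₗ[ℂ] E)) |>.mpr h.2
  haveI hsub : Subsingleton (E ⧸ LinearMap.range (S : E →ₗ[ℂ] E)) :=
    Submodule.Quotient.subsingleton_iff.mpr hrng
  haveI h1 : FiniteDimensional ℂ (LinearMap.ker (S : E →ₗ[ℂ] E)) := by rw [hker]; infer_instance
  haveI h3 : FiniteDimensional ℂ (E ⧸ LinearMap.range (S : E →ₗ[ℂ] E)) := inferInstance
  refine ⟨⟨h1, by rw [hrng]; exact isClosed_univ, h3⟩, ?_⟩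
  rw [fredInd, hker, finrank_bot, Module.finrank_zero_of_subsingleton]
  simp

set_option maxHeartbeats 2000000 in
theorem riesz_index_zero'
    (T : E →L[ℂ] E) (hT : ∀ c : ℂ, c ≠ 0 → _root_.IsFredholm (T - c • (1 : E →L[ℂ] E))) :
    ∀ c : ℂ, c ≠ 0 → _root_.IsFredholm (T - c • (1 : E →L[ℂ] E)) ∧
      fredInd (T - c • (1 : E →L[ℂ] E)) = 0 := by
  set g : ℂ → (E →L[ℂ] E) := fun c => T - c • (1 : E →L[ℂ] E) with hg
  -- local constancy of the index on the punctured plane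
  have H : ∀ a : ℂ, a ≠ 0 → ∃ δ > 0, ∀ x ∈ Metric.ball a δ,
      x ≠ 0 ∧ fredInd (g x) = fredInd (g a) := by
    intro a ha
    obtain ⟨ε, hε, hloc⟩ := locally_const (g a) (hT a ha)
    have hna : 0 < ‖a‖ := norm_pos_iff.mpr ha
    refine ⟨min ε ‖a‖, lt_min hε hna, ?_⟩
    intro x hx
    rw [Metric.mem_ball] at hx
    constructor
    · intro hx0
      rw [hx0, dist_eq_norm, zero_sub, norm_neg] at hx
      have := lt_of_lt_of_le hx (min_le_right _ _)
      exact lt_irrefl _ this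
    · have hdiff : g x - g a = (a - x) • (1 : E →L[ℂ] E) := by
        rw [hg]
        simp only
        rw [sub_sub_sub_cancel_left, ← sub_smul]
      have hb : ‖g x - g a‖ < ε := by
        rw [hdiff]
        have hsmul : ‖(a - x) • (1 : E →L[ℂ] E)‖ ≤ ‖a - x‖ := by
          apply ContinuousLinearMap.opNorm_le_bound _ (norm_nonneg _)
          intro z
          rw [ContinuousLinearMap.smul_apply, ContinuousLinearMap.one_apply, norm_smul]
        calc ‖(a - x) • (1 : E →L[ℂ] E)‖ ≤ ‖a - x‖ := hsmul
          _ = dist x a := by rw [dist_eq_norm, ← norm_neg, neg_sub]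
          _ < ε := lt_of_lt_of_le hx (min_le_left _ _)
      exact ((hloc (g x) hb).2 : fredInd (g x) = fredInd (g a))
  choose δf hδpos hδ using H
  -- the base point: a large real number, where the operator is invertible
  set lam : ℂ := ((‖T‖ + 1 : ℝ) : ℂ) with hlam
  have hTpos : (0 : ℝ) < ‖T‖ + 1 := by positivity
  have hlam0 : lam ≠ 0 := by
    rw [hlam]
    exact_mod_cast Complex.ofReal_ne_zero.mpr (ne_of_gt hTpos)
  have hlamnorm : ‖lam‖ = ‖T‖ + 1 := by
    rw [hlam, Complex.norm_real]
    exact abs_of_pos hTpos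
  have hnorm : ‖(lam⁻¹ : ℂ) • T‖ < 1 := by
    have hle : ‖(lam⁻¹ : ℂ) • T‖ ≤ ‖(lam⁻¹ : ℂ)‖ * ‖T‖ := by
      apply ContinuousLinearMap.opNorm_le_bound _ (by positivity)
      intro z
      rw [ContinuousLinearMap.smul_apply, norm_smul, mul_assoc]
      exact mul_le_mul_of_nonneg_left (T.le_opNorm z) (norm_nonneg _)
    have h2 : ‖(lam⁻¹ : ℂ)‖ * ‖T‖ < 1 := by
      rw [norm_inv, hlamnorm, inv_mul_lt_iff₀ hTpos, mul_one]
      linarith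
    exact lt_of_le_of_lt hle h2
  set u1 : (E →L[ℂ] E)ˣ := Units.oneSub ((lam⁻¹ : ℂ) • T) hnorm with hu1
  have hval : (u1 : E →L[ℂ] E) = 1 - (lam⁻¹ : ℂ) • T := rfl
  have heq : g lam = (-lam) • (u1 : E →L[ℂ] E) := by
    rw [hval, smul_sub, smul_smul, neg_mul, mul_inv_cancel₀ hlam0, neg_smul, neg_smul, one_smul,
      sub_neg_eq_add, hg]
    simp only
    abel
  have hunit : IsUnit (g lam) := by
    rw [heq]
    refine isUnit_iff_exists.mpr ⟨(-lam)⁻¹ • ((u1⁻¹ : (E →L[ℂ] E)ˣ) : E →L[ℂ] E), ?_, ?_⟩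
    · rw [smul_mul_smul_comm, mul_inv_cancel₀ (neg_ne_zero.mpr hlam0), u1.mul_inv, one_smul]
    · rw [smul_mul_smul_comm, inv_mul_cancel₀ (neg_ne_zero.mpr hlam0), u1.inv_mul, one_smul]
  have i0 : fredInd (g lam) = 0 :=
    (fredholm_of_bijective (g lam) (isUnit_iff_bijective.mp hunit)).2
  -- connectivity argument
  intro c hc
  refine ⟨hT c hc, ?_⟩
  set s : Set ℂ := {(0 : ℂ)}ᶜ with hs
  have hscon : IsPreconnected s :=
    (isConnected_compl_singleton_of_one_lt_rank
      (by rw [Complex.rank_real_complex]; exact_mod_cast (by norm_num : (1 : ℕ) < 2)) 0).isPreconnected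
  set A : Set ℂ := ⋃ (a : ℂ) (h : a ≠ 0) (_ : fredInd (g a) = 0), Metric.ball a (δf a h) with hA
  set B : Set ℂ := ⋃ (a : ℂ) (h : a ≠ 0) (_ : fredInd (g a) ≠ 0), Metric.ball a (δf a h) with hB
  have hmemA : ∀ x, x ∈ A ↔ ∃ a, ∃ h : a ≠ 0, fredInd (g a) = 0 ∧ x ∈ Metric.ball a (δf a h) := by
    intro x
    rw [hA]
    simp only [Set.mem_iUnion]
    tauto
  have hmemB : ∀ x, x ∈ B ↔ ∃ a, ∃ h : a ≠ 0, fredInd (g a) ≠ 0 ∧ x ∈ Metric.ball a (δf a h) := by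
    intro x
    rw [hB]
    simp only [Set.mem_iUnion]
    tauto
  have hAopen : IsOpen A := isOpen_iUnion fun a => isOpen_iUnion fun h =>
    isOpen_iUnion fun _ => Metric.isOpen_ball
  have hBopen : IsOpen B := isOpen_iUnion fun a => isOpen_iUnion fun h =>
    isOpen_iUnion fun _ => Metric.isOpen_ball
  have hcover : s ⊆ A ∪ B := by
    intro a has
    have ha : a ≠ 0 := has
    have hmem : a ∈ Metric.ball a (δf a ha) := Metric.mem_ball_self (hδpos a ha)
    by_cases h0 : fredInd (g a) = 0
    · exact Or.inl ((hmemA a).mpr ⟨a, ha, h0, hmem⟩)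
    · exact Or.inr ((hmemB a).mpr ⟨a, ha, h0, hmem⟩)
  have hdisj : ∀ x, x ∈ A → x ∈ B → False := by
    intro x hxA hxB
    obtain ⟨a, ha, ha0, hxa⟩ := (hmemA x).mp hxA
    obtain ⟨b, hb, hb0, hxb⟩ := (hmemB x).mp hxB
    have h1 : fredInd (g x) = fredInd (g a) := (hδ a ha x hxa).2
    have h2 : fredInd (g x) = fredInd (g b) := (hδ b hb x hxb).2
    exact hb0 (h2 ▸ h1 ▸ ha0 : fredInd (g b) = 0)
  have hsA : (s ∩ A).Nonempty := by
    refine ⟨lam, ?_, ?_⟩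
    · exact hlam0
    · exact (hmemA lam).mpr ⟨lam, hlam0, i0, Metric.mem_ball_self (hδpos lam hlam0)⟩
  have hsB : ¬ (s ∩ B).Nonempty := by
    intro hsB
    obtain ⟨x, hxs, hxAB⟩ := hscon A B hAopen hBopen hcover hsA hsB
    exact hdisj x hxAB.1 hxAB.2
  have hcA : c ∈ A := by
    rcases hcover (show c ∈ s from hc) with h | h
    · exact h
    · exact absurd ⟨c, hc, h⟩ hsB
  obtain ⟨a, ha, ha0, hca⟩ := (hmemA c).mp hcA
  have := (hδ a ha c hca).2
  show fredInd (g c) = 0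
  rw [this, ha0]

end Aux

/-- If `T - λI` is Fredholm for every nonzero scalar `λ` (i.e. `T` is a
Riesz operator), then `T - λI` is Fredholm of index `0` for every nonzero `λ`. -/
theorem riesz_index_zero
    {X : Type*} [NormedAddCommGroup X] [NormedSpace ℂ X] [CompleteSpace X]
    (T : X →L[ℂ] X) (hT : IsRiesz T) :
    ∀ c : ℂ, c ≠ 0 → _root_.IsFredholm (T - c • (1 : X →L[ℂ] X)) ∧
      fredInd (T - c • (1 : X →L[ℂ] X)) = 0 := by
  intro c hc
  exact riesz_index_zero' T hT c hc
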